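/- Let m ≥ 2 and let s be a divisor of m with 1 < s < m. Let (U,V) be a matching vector family in Z_m^n such that ⟨u,v⟩ ≡ 0 (mod s) for all u ∈ U, v ∈ V. Then |(U,V)| ≤ MV(m/s, n·log m), where log denotes logarithm base 2. -/

import Mathlib

open Finset

/-- Inner product of two vectors in `(ZMod m)^n`. -/
def mvInner {m n : ℕ} (u v : Fin n → ZMod m) : ZMod m := ∑ k, u k * v k

lemma mvInner_sum_left {m n : ℕ} {ι : Type*} (s : Finset ι) (f : ι → Fin n → ZMod m)
    (v : Fin n → ZMod m) : mvInner (∑ k ∈ s, f k) v = ∑ k ∈ s, mvInner (f k) v := by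
  simp only [mvInner, Finset.sum_apply, Finset.sum_mul]
  rw [Finset.sum_comm]

lemma mvInner_smul_left {m n : ℕ} (a : ZMod m) (u v : Fin n → ZMod m) :
    mvInner (a • u) v = a * mvInner u v := by
  simp [mvInner, Finset.mul_sum, mul_assoc]

lemma mvInner_add_left {m n : ℕ} (u u' v : Fin n → ZMod m) :
    mvInner (u + u') v = mvInner u v + mvInner u' v := by
  simp [mvInner, add_mul, Finset.sum_add_distrib]

lemma mvInner_zsmul_left {m n : ℕ} (c : ℤ) (u v : Fin n → ZMod m) :
    mvInner (c • u) v = c • mvInner u v := by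
  rw [← Int.cast_smul_eq_zsmul (ZMod m), mvInner_smul_left, ← zsmul_eq_mul]

lemma mvInner_zero_left {m n : ℕ} (v : Fin n → ZMod m) : mvInner 0 v = 0 := by
  simp [mvInner]

-- iota
section
variable (m s : ℕ) (hs : s ∣ m) (hm : 0 < m) (hs0 : 0 < s)

noncomputable def iota : ZMod (m/s) →+ ZMod m :=
  ZMod.lift (m/s) ⟨(zmultiplesHom (ZMod m)) (s : ZMod m), by
    show ((m/s : ℕ) : ℤ) • (s : ZMod m) = 0
    rw [zsmul_eq_mul, Int.cast_natCast, ← Nat.cast_mul, Nat.div_mul_cancel hs,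
      ZMod.natCast_self]⟩
end

section
variable (m s : ℕ) (hs : s ∣ m)

lemma iota_intCast (a : ℤ) : iota m s hs ((a : ZMod (m/s))) = (a : ZMod m) * (s : ZMod m) := by
  rw [iota, ZMod.lift_coe]
  show a • (s : ZMod m) = _
  rw [zsmul_eq_mul]

lemma iota_injective (hs0 : 0 < s) (hm : 2 ≤ m) : Function.Injective (iota m s hs) := by
  have hrm : m / s * s = m := Nat.div_mul_cancel hs
  have hr : NeZero (m/s) := ⟨(Nat.div_pos (Nat.le_of_dvd (by omega) hs) hs0).ne'⟩
  rw [injective_iff_map_eq_zero]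
  intro c hc
  have h1 : c = ((c.val : ℤ) : ZMod (m/s)) := by simp [ZMod.natCast_val, ZMod.intCast_cast]
  rw [h1, iota_intCast, Int.cast_natCast, ← Nat.cast_mul, ZMod.natCast_eq_zero_iff] at hc
  have : m / s ∣ c.val := by
    refine (Nat.mul_dvd_mul_iff_right hs0).mp ?_
    rwa [hrm]
  have h0 := Nat.eq_zero_of_dvd_of_lt this (ZMod.val_lt c)
  have := ZMod.val_cast_of_lt (show c.val < m/s from ZMod.val_lt c)
  rw [h1, Int.cast_natCast, h0, Nat.cast_zero]
end

lemma iota_surj_on_ker {m s : ℕ} (hs : s ∣ m) [NeZero m] [NeZero s] (y : ZMod m)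
    (hy : (ZMod.cast y : ZMod s) = 0) : ∃ c : ZMod (m/s), iota m s hs c = y := by
  have hsv : s ∣ y.val := by
    rwa [← ZMod.natCast_val, ZMod.natCast_eq_zero_iff] at hy
  refine ⟨((y.val / s : ℕ) : ZMod (m/s)), ?_⟩
  have : ((y.val / s : ℕ) : ZMod (m/s)) = (((y.val / s : ℕ) : ℤ) : ZMod (m/s)) := (Int.cast_natCast _).symm
  rw [this, iota_intCast, Int.cast_natCast, ← Nat.cast_mul, Nat.div_mul_cancel hsv,
    ZMod.natCast_val, ZMod.cast_id]

/-- `(U, V)` is a matching vector family of size `t` in `(ZMod m)^n`. -/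
def IsMVFamily (m n t : ℕ) (U V : Fin t → Fin n → ZMod m) : Prop :=
  (∀ i, mvInner (U i) (V i) = 0) ∧ ∀ i j : Fin t, i ≠ j → mvInner (U i) (V j) ≠ 0

/-- `MVmax m n` is the maximum size of a matching vector family in `(ZMod m)^n`. -/
noncomputable def MVmax (m n : ℕ) : ℕ :=
  sSup {t : ℕ | ∃ U V : Fin t → Fin n → ZMod m, IsMVFamily m n t U V}

/-- Lemma 5.2: if all inner products of an MV family in `(ZMod m)^n` vanish modulo a proper
divisor `s` of `m`, then the family has size at most `MV(m/s, n·log m)`. -/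
theorem mv_bound_of_zero_mod_divisor (m n s : ℕ) (hm : 2 ≤ m) (hs : s ∣ m)
    (hs1 : 1 < s) (hsm : s < m)
    (t : ℕ) (U V : Fin t → Fin n → ZMod m) (hMV : IsMVFamily m n t U V)
    (hIP : ∀ i j : Fin t, (ZMod.cast (mvInner (U i) (V j)) : ZMod s) = 0) :
    t ≤ MVmax (m / s) ⌊(n : ℝ) * Real.logb 2 (m : ℝ)⌋₊ := by
  classical
  haveI : NeZero m := ⟨by omega⟩
  haveI : NeZero s := ⟨by omega⟩
  set r := m / s with hrdef
  have hrm : r * s = m := Nat.div_mul_cancel hs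
  have hr2 : 2 ≤ r := by
    rcases Nat.lt_or_ge r 2 with h | h
    · interval_cases r <;> omega
    · exact h
  haveI : NeZero r := ⟨by omega⟩
  set D := ⌊(n : ℝ) * Real.logb 2 (m : ℝ)⌋₊ with hDdef
  have hnD : n ≤ D := by
    have h1 : (1 : ℝ) ≤ Real.logb 2 m := by
      rw [show (1:ℝ) = Real.logb 2 2 by simp]
      exact Real.logb_le_logb_of_le (by norm_num) (by norm_num) (by exact_mod_cast hm)
    rw [hDdef, Nat.le_floor_iff (by nlinarith [Nat.cast_nonneg (α := ℝ) n])]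
    nlinarith [Nat.cast_nonneg (α := ℝ) n]
  -- the span of the U's
  set M : Submodule (ZMod m) (Fin n → ZMod m) := Submodule.span (ZMod m) (Set.range U) with hM
  have hMker : ∀ y ∈ M, ∀ j, (ZMod.cast (mvInner y (V j)) : ZMod s) = 0 := by
    intro y hy j
    have hchom : ∀ w : ZMod m, (ZMod.cast w : ZMod s) = ZMod.castHom hs (ZMod s) w :=
      fun w => (ZMod.castHom_apply w).symm
    induction hy using Submodule.span_induction with
    | mem z hz => obtain ⟨i, rfl⟩ := hz; exact hIP i j
    | zero => rw [mvInner_zero_left]; rw [hchom, map_zero]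
    | add z w hz hw hz' hw' =>
        rw [mvInner_add_left, hchom, map_add, ← hchom, ← hchom, hz', hw', add_zero]
    | smul a z hz hz' =>
        rw [mvInner_smul_left, hchom, map_mul, ← hchom (mvInner z (V j)), hz', mul_zero]
  -- integer lifts
  set x : Fin t → Fin n → ℤ := fun i p => ((U i p).val : ℤ) with hx
  set πl : (Fin n → ℤ) →ₗ[ℤ] (Fin n → ZMod m) :=
    LinearMap.pi (fun p => (Int.castAddHom (ZMod m)).toIntLinearMap ∘ₗ LinearMap.proj p) with hπl
  have hπx : ∀ i, πl (x i) = U i := by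
    intro i; funext p
    simp [hπl, hx, LinearMap.pi_apply, ZMod.natCast_val, ZMod.cast_id]
  set N : Submodule ℤ (Fin n → ℤ) := Submodule.span ℤ (Set.range x) with hN
  haveI : Module.Finite ℤ N := inferInstance
  haveI : Module.Free ℤ N := inferInstance
  set l := Module.finrank ℤ N with hl
  have hln : l ≤ n := by
    have h1 := Submodule.finrank_le N
    rwa [Module.finrank_pi, Fintype.card_fin] at h1
  obtain e : Module.Free.ChooseBasisIndex ℤ N ≃ Fin l :=
    Fintype.equivFinOfCardEq (Module.finrank_eq_card_chooseBasisIndex ℤ N).symm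
  set b : Module.Basis (Fin l) ℤ N := (Module.Free.chooseBasis ℤ N).reindex e with hb
  set xN : Fin t → N := fun i => ⟨x i, Submodule.subset_span (Set.mem_range_self i)⟩ with hxN
  set a : Fin t → Fin l → ℤ := fun i k => b.repr (xN i) k with ha
  set g : Fin l → Fin n → ZMod m := fun k => πl ((b k : Fin n → ℤ)) with hg
  have hπN : ∀ y ∈ N, πl y ∈ M := by
    intro y hy
    have h1 : πl y ∈ Submodule.map πl N := Submodule.mem_map_of_mem hy
    rw [hN, Submodule.map_span] at h1
    have h2 : Submodule.span ℤ (πl '' Set.range x) ≤ M.restrictScalars ℤ := by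
      rw [Submodule.span_le]
      rintro _ ⟨_, ⟨i, rfl⟩, rfl⟩
      exact Submodule.subset_span ⟨i, (hπx i).symm⟩
    exact h2 h1
  have hgM : ∀ k, g k ∈ M := fun k => hπN _ (b k).2
  -- decomposition of U i
  have hUdec : ∀ i, U i = ∑ k, (a i k) • g k := by
    intro i
    have h1 : (∑ k, a i k • b k : N) = xN i := b.sum_repr (xN i)
    have h2 : ∑ k, a i k • (b k : Fin n → ℤ) = x i := by
      have := congrArg (Subtype.val) h1
      simpa using this
    rw [← hπx i, ← h2, map_sum]
    exact Finset.sum_congr rfl fun k _ => map_smul πl (a i k) _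
  -- the new family
  have hexists : ∀ j k, ∃ c : ZMod r, iota m s hs c = mvInner (g k) (V j) :=
    fun j k => iota_surj_on_ker hs _ (hMker _ (hgM k) j)
  set V' : Fin t → Fin l → ZMod r := fun j k => Classical.choose (hexists j k) with hV'
  have hV'spec : ∀ j k, iota m s hs (V' j k) = mvInner (g k) (V j) :=
    fun j k => Classical.choose_spec (hexists j k)
  set U' : Fin t → Fin l → ZMod r := fun i k => ((a i k : ℤ) : ZMod r) with hU'
  have hkey : ∀ i j, iota m s hs (mvInner (U' i) (V' j)) = mvInner (U i) (V j) := by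
    intro i j
    rw [mvInner, map_sum]
    have hterm : ∀ k, iota m s hs (U' i k * V' j k)
        = mvInner ((a i k) • g k) (V j) := by
      intro k
      have h1 : U' i k * V' j k = (a i k) • V' j k := (zsmul_eq_mul (V' j k) (a i k)).symm
      rw [h1, map_zsmul, hV'spec, ← mvInner_zsmul_left]
    rw [Finset.sum_congr rfl (fun k _ => hterm k), ← mvInner_sum_left, ← hUdec i]
  -- padded family
  have hlD : l ≤ D := le_trans hln hnD
  set Uf : Fin t → ℕ → ZMod r := fun i q => if h : q < l then U' i ⟨q, h⟩ else 0 with hUf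
  set Vf : Fin t → ℕ → ZMod r := fun j q => if h : q < l then V' j ⟨q, h⟩ else 0 with hVf
  set U'' : Fin t → Fin D → ZMod r := fun i q => Uf i q.val with hU''
  set V'' : Fin t → Fin D → ZMod r := fun j q => Vf j q.val with hV''
  have hpad : ∀ i j, mvInner (U'' i) (V'' j) = mvInner (U' i) (V' j) := by
    intro i j
    show ∑ q : Fin D, Uf i q.val * Vf j q.val = _
    rw [Fin.sum_univ_eq_sum_range (fun q => Uf i q * Vf j q) D]
    rw [← Finset.sum_subset (Finset.range_subset_range.mpr hlD) (fun q _ hq => by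
      have hql : ¬ q < l := by simpa using hq
      simp [hUf, hql])]
    rw [← Fin.sum_univ_eq_sum_range (fun q => Uf i q * Vf j q) l]
    refine Finset.sum_congr rfl fun k _ => ?_
    simp [hUf, hVf, k.isLt]
  have hfam : IsMVFamily r D t U'' V'' := by
    constructor
    · intro i
      have h0 : iota m s hs (mvInner (U' i) (V' i)) = iota m s hs 0 := by
        rw [map_zero, hkey]; exact hMV.1 i
      rw [hpad]
      exact iota_injective m s hs (by omega) hm h0
    · intro i j hij hzero
      rw [hpad] at hzero
      refine hMV.2 i j hij ?_
      rw [← hkey i j, hzero, map_zero]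
  have hBdd : BddAbove {t' : ℕ | ∃ A B : Fin t' → Fin D → ZMod r, IsMVFamily r D t' A B} := by
    refine ⟨Fintype.card (Fin D → ZMod r), ?_⟩
    rintro t' ⟨A, B, hAB⟩
    have hinj : Function.Injective A := by
      intro i j hij
      by_contra hne
      refine hAB.2 j i (Ne.symm hne) ?_
      rw [← hij]
      exact hAB.1 i
    simpa using Fintype.card_le_of_injective A hinj
  exact le_csSup hBdd ⟨U'', V'', hfam⟩
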